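/- Let A be a closed, densely defined operator on a complex Hilbert space H and n ≥ 3 an integer such that A*A = Aⁿ (equality of operators including domains). Then A is everywhere defined and bounded, i.e., A ∈ B(H). -/

import Mathlib

open LinearPMap

variable {H : Type*} [NormedAddCommGroup H] [InnerProductSpace ℂ H] [CompleteSpace H]

/-- Composition of two (possibly unbounded) partially defined operators, with the
natural domain \`{x ∈ D(f) : f x ∈ D(g)}\`. -/
noncomputable def LinearPMap.pcomp (g f : H →ₗ.[ℂ] H) : H →ₗ.[ℂ] H :=
  g.comp (f.domRestrict ((g.domain.comap f.toFun).map f.domain.subtype))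
    (fun x => by
      obtain ⟨hS, hD⟩ := x.2
      obtain ⟨y, hy, hyx⟩ := hS
      rw [LinearPMap.domRestrict_apply (y := y) hyx.symm]
      exact hy)

/-- The `n`-th power of a partially defined operator, with its natural domain. -/
noncomputable def LinearPMap.ppow (A : H →ₗ.[ℂ] H) : ℕ → H →ₗ.[ℂ] H
  | 0 => (LinearMap.id : H →ₗ[ℂ] H).toPMap ⊤
  | n + 1 => A.pcomp (A.ppow n)

set_option linter.unusedSectionVars false
set_option maxHeartbeats 1600000

lemma real_root {n : ℕ} (hn : 3 ≤ n) {t : ℝ}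
    (ht : (t - t^2)^n - (t^(n-1) - t^n)^2 = 0) : t = 0 ∨ t = 1/2 ∨ t = 1 := by
  by_contra hcon
  push_neg at hcon
  obtain ⟨ht0, ht12, ht1⟩ := hcon
  obtain ⟨m, rfl⟩ : ∃ m, n = m + 3 := ⟨n - 3, by omega⟩
  have e1 : t - t^2 = t * (1 - t) := by ring
  have e2 : t^(m+3-1) - t^(m+3) = t^(m+2) * (1 - t) := by
    have h3 : m + 3 - 1 = m + 2 := by omega
    rw [h3]; ring
  rw [e1, e2, mul_pow, mul_pow] at ht
  have h1t : (1 : ℝ) - t ≠ 0 := fun hc => ht1 (by linarith)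
  have hfac : t^(m+3) * (1-t)^2 * ((1-t)^(m+1) - t^(m+1)) = 0 := by
    have expand : t^(m+3) * (1-t)^(m+3) - (t^(m+2))^2 * ((1-t))^2
        = t^(m+3) * (1-t)^2 * ((1-t)^(m+1) - t^(m+1)) := by ring
    rw [← expand]; exact ht
  have hne : t^(m+3) * (1-t)^2 ≠ 0 := mul_ne_zero (pow_ne_zero _ ht0) (pow_ne_zero _ h1t)
  have hdiff : (1-t)^(m+1) - t^(m+1) = 0 := by
    rcases mul_eq_zero.mp hfac with hc | hc
    · exact absurd hc hne
    · exact hc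
  have heqp : (1-t)^(m+1) = t^(m+1) := by linarith
  have habs : |1 - t| = |t| := by
    have h1 : |1-t|^(m+1) = |t|^(m+1) := by rw [← abs_pow, ← abs_pow, heqp]
    rcases lt_trichotomy |1-t| |t| with hlt | heqq | hgt
    · have := pow_lt_pow_left₀ hlt (abs_nonneg _) (by omega : m + 1 ≠ 0)
      linarith
    · exact heqq
    · have := pow_lt_pow_left₀ hgt (abs_nonneg _) (by omega : m + 1 ≠ 0)
      linarith
  have hsq : (1-t)^2 = t^2 := by rw [← sq_abs (1-t), ← sq_abs t, habs]
  apply ht12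
  nlinarith [hsq]


namespace Stmt19Aux

local notation "⟪" x ", " y "⟫" => @inner ℂ _ _ x y




/-- `Iter A k x y` means that `x` is in the domain of the `k`-th iterate of `A`
and `A^k x = y`. -/
def Iter (A : H →ₗ.[ℂ] H) : ℕ → H → H → Prop
  | 0, x, y => x = y
  | k+1, x, y => ∃ (z : H) (hz : z ∈ A.domain), Iter A k x z ∧ A ⟨z, hz⟩ = y

variable {A : H →ₗ.[ℂ] H}

theorem iter_unique : ∀ {k : ℕ} {x y y' : H}, Iter A k x y → Iter A k x y' → y = y' := by
  intro k
  induction k with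
  | zero => intro x y y' h1 h2; exact h1.symm.trans h2
  | succ k ih =>
    rintro x y y' ⟨z, hz, hzi, rfl⟩ ⟨z', hz', hzi', rfl⟩
    obtain rfl : z = z' := ih hzi hzi'
    rfl

theorem iter_add {a : ℕ} : ∀ {b : ℕ} {x y : H},
    Iter A (a + b) x y ↔ ∃ z, Iter A b x z ∧ Iter A a z y := by
  induction a with
  | zero =>
    intro b x y
    rw [Nat.zero_add]
    exact ⟨fun h => ⟨y, h, rfl⟩, fun ⟨z, hz, hzy⟩ => hzy ▸ hz⟩
  | succ a ih =>
    intro b x y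
    rw [Nat.succ_add]
    constructor
    · rintro ⟨z, hz, hzi, rfl⟩
      obtain ⟨w, hw, hwz⟩ := ih.mp hzi
      exact ⟨w, hw, z, hz, hwz, rfl⟩
    · rintro ⟨w, hw, z, hz, hwz, rfl⟩
      exact ⟨z, hz, ih.mpr ⟨w, hw, hwz⟩, rfl⟩

theorem iter_prefix {m k : ℕ} (hmk : m ≤ k) {x y : H} (h : Iter A k x y) :
    ∃ z, Iter A m x z := by
  obtain ⟨a, rfl⟩ : ∃ a, k = a + m := ⟨k - m, (Nat.sub_add_cancel hmk).symm⟩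
  obtain ⟨z, hz, -⟩ := iter_add.mp h
  exact ⟨z, hz⟩

theorem iter_vadd : ∀ {k : ℕ} {x x' y y' : H},
    Iter A k x y → Iter A k x' y' → Iter A k (x + x') (y + y') := by
  intro k
  induction k with
  | zero => intro x x' y y' h1 h2; exact congrArg₂ (· + ·) h1 h2
  | succ k ih =>
    rintro x x' y y' ⟨z, hz, hzi, rfl⟩ ⟨z', hz', hzi', rfl⟩
    refine ⟨z + z', add_mem hz hz', ih hzi hzi', ?_⟩
    have : (⟨z + z', add_mem hz hz'⟩ : A.domain) = ⟨z, hz⟩ + ⟨z', hz'⟩ := rfl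
    rw [this, A.map_add]

theorem mem_pcomp_iff {g f : H →ₗ.[ℂ] H} {x : H} :
    x ∈ (g.pcomp f).domain ↔ ∃ hx : x ∈ f.domain, f ⟨x, hx⟩ ∈ g.domain := by
  constructor
  · rintro ⟨hS, hD⟩
    obtain ⟨y, hy, hyx⟩ := hS
    refine ⟨hD, ?_⟩
    have : (⟨x, hD⟩ : f.domain) = y := Subtype.ext hyx.symm
    rw [this]
    exact hy
  · rintro ⟨hx, hgx⟩
    exact ⟨⟨⟨x, hx⟩, hgx, rfl⟩, hx⟩

theorem pcomp_apply' {g f : H →ₗ.[ℂ] H} {x : H} (h1 : x ∈ f.domain)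
    (h2 : f ⟨x, h1⟩ ∈ g.domain) (hx : x ∈ (g.pcomp f).domain) :
    (g.pcomp f) ⟨x, hx⟩ = g ⟨f ⟨x, h1⟩, h2⟩ := by
  show g.toFun _ = g.toFun _
  congr 1

theorem apply_congr {f g : H →ₗ.[ℂ] H} (hfg : f = g) {x : H} (hx : x ∈ f.domain)
    (hx' : x ∈ g.domain) : f ⟨x, hx⟩ = g ⟨x, hx'⟩ := by
  subst hfg; rfl

theorem ppow_iter (k : ℕ) (x : H) :
    (x ∈ (A.ppow k).domain ↔ ∃ y, Iter A k x y) ∧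
    ∀ hx : x ∈ (A.ppow k).domain, Iter A k x ((A.ppow k) ⟨x, hx⟩) := by
  induction k generalizing x with
  | zero =>
    constructor
    · exact ⟨fun _ => ⟨x, rfl⟩, fun _ => Submodule.mem_top⟩
    · intro hx
      show x = (A.ppow 0) ⟨x, hx⟩
      rfl
  | succ k ih =>
    have hd : (A.ppow (k+1)) = A.pcomp (A.ppow k) := rfl
    constructor
    · rw [hd, mem_pcomp_iff]
      constructor
      · rintro ⟨hx, hAx⟩
        exact ⟨A ⟨(A.ppow k) ⟨x, hx⟩, hAx⟩, (A.ppow k) ⟨x, hx⟩, hAx, (ih x).2 hx, rfl⟩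
      · rintro ⟨y, z, hz, hzi, rfl⟩
        have hx : x ∈ (A.ppow k).domain := (ih x).1.mpr ⟨z, hzi⟩
        have : (A.ppow k) ⟨x, hx⟩ = z := iter_unique ((ih x).2 hx) hzi
        exact ⟨hx, by rw [this]; exact hz⟩
    · intro hx
      have hx' : x ∈ (A.pcomp (A.ppow k)).domain := by rw [← hd]; exact hx
      obtain ⟨h1, h2⟩ := mem_pcomp_iff.mp hx'
      have e : (A.ppow (k+1)) ⟨x, hx⟩ = A ⟨(A.ppow k) ⟨x, h1⟩, h2⟩ :=
        (apply_congr hd hx hx').trans (pcomp_apply' h1 h2 hx')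
      rw [e]
      exact ⟨(A.ppow k) ⟨x, h1⟩, h2, (ih x).2 h1, rfl⟩



/-- `x` solves `x + A*A x = h`. -/
def Sol (A : H →ₗ.[ℂ] H) (h x : H) : Prop :=
  ∃ (h1 : x ∈ A.domain) (h2 : A ⟨x, h1⟩ ∈ A.adjoint.domain),
    x + A.adjoint ⟨A ⟨x, h1⟩, h2⟩ = h

theorem sol_exists (hdense : Dense (A.domain : Set H)) (hclosed : A.IsClosed) (h0 : H) :
    ∃ x, Sol A h0 x := by
  classical
  set e : WithLp 2 (H × H) ≃L[ℂ] H × H := WithLp.prodContinuousLinearEquiv 2 ℂ H H with he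
  set G2 : Submodule ℂ (WithLp 2 (H × H)) := A.graph.comap (e.toLinearEquiv.toLinearMap) with hG2
  have hG2closed : IsClosed (G2 : Set (WithLp 2 (H × H))) := by
    have : (G2 : Set (WithLp 2 (H × H))) = ⇑e ⁻¹' (A.graph : Set (H × H)) := rfl
    rw [this]
    exact hclosed.preimage e.continuous
  haveI : CompleteSpace G2 := hG2closed.completeSpace_coe
  obtain ⟨y, hyG, z, hz, hv⟩ := G2.exists_add_mem_mem_orthogonal (e.symm (h0, 0))
  have hyg : e y ∈ A.graph := hyG
  obtain ⟨d, hd1, hd2⟩ := A.mem_graph_iff.mp hyg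
  -- z = e.symm (h0 - d, -(A d))
  have hez : e z = (h0 - (d : H), -(A d)) := by
    have h1 : e (e.symm (h0, 0)) = e y + e z := by rw [hv]; exact map_add e y z
    rw [e.apply_symm_apply] at h1
    have h2 : e y = ((d : H), A d) := by
      apply Prod.ext
      · exact hd1.symm
      · exact hd2.symm
    rw [h2] at h1
    have h3 : e z = (h0, 0) - ((d : H), A d) := by rw [h1]; abel
    rw [h3]
    apply Prod.ext <;> simp
  -- orthogonality relation
  have horth : ∀ w : A.domain, ⟪(w : H), h0 - (d : H)⟫ + ⟪A w, -(A d)⟫ = 0 := by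
    intro w
    have hwG : e.symm ((w : H), A w) ∈ G2 := by
      show e (e.symm _) ∈ A.graph
      rw [e.apply_symm_apply]
      exact A.mem_graph w
    have := (Submodule.mem_orthogonal G2 z).mp hz _ hwG
    have hinner : ⟪e.symm ((w : H), A w), z⟫
        = ⟪(w : H), h0 - (d : H)⟫ + ⟪A w, -(A d)⟫ := by
      have hz' : z = e.symm (h0 - (d : H), -(A d)) := by
        rw [← hez]; exact (e.symm_apply_apply z).symm
      rw [hz', WithLp.prod_inner_apply]
      rfl
    rw [hinner] at this
    exact this
  have hpair : ∀ w : A.domain, ⟪h0 - (d : H), (w : H)⟫ = ⟪A d, A w⟫ := by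
    intro w
    have h1 := horth w
    rw [inner_neg_right] at h1
    have h2 : ⟪(w : H), h0 - (d : H)⟫ = ⟪A w, A d⟫ := by linear_combination h1
    calc ⟪h0 - (d : H), (w : H)⟫ = starRingEnd ℂ ⟪(w : H), h0 - (d : H)⟫ := (inner_conj_symm _ _).symm
    _ = starRingEnd ℂ ⟪A w, A d⟫ := by rw [h2]
    _ = ⟪A d, A w⟫ := inner_conj_symm _ _
  have h2 : A d ∈ A.adjoint.domain :=
    LinearPMap.mem_adjoint_domain_of_exists _ ⟨h0 - (d : H), fun w => hpair w⟩
  have hval : A.adjoint ⟨A d, h2⟩ = h0 - (d : H) :=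
    LinearPMap.adjoint_apply_eq hdense _ (fun w => hpair w)
  refine ⟨(d : H), d.2, ?_, ?_⟩
  · show A ⟨(d : H), d.2⟩ ∈ A.adjoint.domain
    convert h2 using 2
  · show ((d : H) + A.adjoint ⟨A ⟨(d:H), d.2⟩, _⟩ : H) = h0
    have : (⟨(d : H), d.2⟩ : A.domain) = d := rfl
    rw [show A.adjoint ⟨A ⟨(d:H), d.2⟩, by rw [this]; exact h2⟩ = A.adjoint ⟨A d, h2⟩ by congr 2,
      hval]
    abel

theorem sol_inner_eq (hdense : Dense (A.domain : Set H)) {h x : H} (hs : Sol A h x)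
    (w : A.domain) : ⟪h - x, (w : H)⟫ = ⟪A ⟨x, hs.fst⟩, A w⟫ := by
  obtain ⟨h1, h2, heq⟩ := hs
  have hadj := LinearPMap.adjoint_isFormalAdjoint hdense (T := A) ⟨A ⟨x, h1⟩, h2⟩ w
  have : h - x = A.adjoint ⟨A ⟨x, h1⟩, h2⟩ := by rw [← heq]; abel
  rw [this]
  exact hadj



theorem sol_norm (hdense : Dense (A.domain : Set H)) {h x : H} (hs : Sol A h x) :
    ‖x‖ ≤ ‖h‖ ∧ ‖A ⟨x, hs.fst⟩‖ ≤ ‖h‖ := by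
  have key := sol_inner_eq hdense hs ⟨x, hs.fst⟩
  -- ⟪h - x, x⟫ = ⟪Ax, Ax⟫
  have h1 : ⟪h, x⟫ = ⟪x, x⟫ + ⟪A ⟨x, hs.fst⟩, A ⟨x, hs.fst⟩⟫ := by
    have : ⟪h - x, x⟫ = ⟪h, x⟫ - ⟪x, x⟫ := by rw [inner_sub_left]
    rw [this] at key
    linear_combination key
  have h2 : RCLike.re ⟪h, x⟫ = ‖x‖^2 + ‖A ⟨x, hs.fst⟩‖^2 := by
    rw [h1, _root_.map_add]
    rw [inner_self_eq_norm_sq, inner_self_eq_norm_sq]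
  have h3 : RCLike.re ⟪h, x⟫ ≤ ‖h‖ * ‖x‖ := by
    calc RCLike.re ⟪h, x⟫ ≤ ‖(⟪h, x⟫ : ℂ)‖ := RCLike.re_le_norm _
    _ ≤ ‖h‖ * ‖x‖ := norm_inner_le_norm _ _
  have hx : ‖x‖ ≤ ‖h‖ := by nlinarith [norm_nonneg x, norm_nonneg h, norm_nonneg (A ⟨x, hs.fst⟩), sq_nonneg (‖x‖ - ‖h‖)]
  refine ⟨hx, ?_⟩
  nlinarith [norm_nonneg x, norm_nonneg h, norm_nonneg (A ⟨x, hs.fst⟩)]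

theorem sol_sub {h x h' x'} (hs : Sol A h x) (hs' : Sol A h' x') : Sol A (h - h') (x - x') := by
  obtain ⟨h1, h2, he⟩ := hs
  obtain ⟨h1', h2', he'⟩ := hs'
  refine ⟨sub_mem h1 h1', ?_, ?_⟩
  · have : A ⟨x - x', sub_mem h1 h1'⟩ = A ⟨x, h1⟩ - A ⟨x', h1'⟩ := by
      rw [show (⟨x - x', sub_mem h1 h1'⟩ : A.domain) = ⟨x, h1⟩ - ⟨x', h1'⟩ from rfl, A.map_sub]
    rw [this]
    exact sub_mem h2 h2'
  · have hA : A ⟨x - x', sub_mem h1 h1'⟩ = A ⟨x, h1⟩ - A ⟨x', h1'⟩ := by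
      rw [show (⟨x - x', sub_mem h1 h1'⟩ : A.domain) = ⟨x, h1⟩ - ⟨x', h1'⟩ from rfl, A.map_sub]
    have : (⟨A ⟨x - x', sub_mem h1 h1'⟩, by rw [hA]; exact sub_mem h2 h2'⟩ : A.adjoint.domain)
        = ⟨A ⟨x, h1⟩, h2⟩ - ⟨A ⟨x', h1'⟩, h2'⟩ := by
      apply Subtype.ext
      rw [show ((⟨A ⟨x, h1⟩, h2⟩ - ⟨A ⟨x', h1'⟩, h2'⟩ : A.adjoint.domain) : H)
        = A ⟨x, h1⟩ - A ⟨x', h1'⟩ from rfl]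
      exact hA
    rw [this, A.adjoint.map_sub]
    rw [← he, ← he']
    abel

theorem sol_smul {h x} (c : ℂ) (hs : Sol A h x) : Sol A (c • h) (c • x) := by
  obtain ⟨h1, h2, he⟩ := hs
  refine ⟨Submodule.smul_mem _ c h1, ?_, ?_⟩
  · have : A ⟨c • x, Submodule.smul_mem _ c h1⟩ = c • A ⟨x, h1⟩ := by
      rw [show (⟨c • x, Submodule.smul_mem _ c h1⟩ : A.domain) = c • ⟨x, h1⟩ from rfl, A.map_smul]
    rw [this]
    exact Submodule.smul_mem _ c h2
  · have hA : A ⟨c • x, Submodule.smul_mem _ c h1⟩ = c • A ⟨x, h1⟩ := by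
      rw [show (⟨c • x, Submodule.smul_mem _ c h1⟩ : A.domain) = c • ⟨x, h1⟩ from rfl, A.map_smul]
    have : (⟨A ⟨c • x, Submodule.smul_mem _ c h1⟩, by rw [hA]; exact Submodule.smul_mem _ c h2⟩
        : A.adjoint.domain) = c • ⟨A ⟨x, h1⟩, h2⟩ := by
      apply Subtype.ext
      rw [show ((c • ⟨A ⟨x, h1⟩, h2⟩ : A.adjoint.domain) : H) = c • A ⟨x, h1⟩ from rfl]
      exact hA
    rw [this, A.adjoint.map_smul, ← he, smul_add]

theorem sol_unique (hdense : Dense (A.domain : Set H)) {h x x'} (hs : Sol A h x)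
    (hs' : Sol A h x') : x = x' := by
  have h0 : Sol A (h - h) (x - x') := sol_sub hs hs'
  rw [sub_self] at h0
  have := (sol_norm hdense h0).1
  rw [norm_zero] at this
  have : ‖x - x'‖ = 0 := le_antisymm this (norm_nonneg _)
  rwa [norm_sub_eq_zero_iff] at this

theorem exists_R (hdense : Dense (A.domain : Set H)) (hclosed : A.IsClosed)
    (hsolex : ∀ h0 : H, ∃ x, Sol A h0 x) :
    ∃ R : H →L[ℂ] H, ∀ h, Sol A h (R h) := by
  classical
  have hf : ∀ h0 : H, Sol A h0 (Classical.choose (hsolex h0)) :=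
    fun h0 => Classical.choose_spec (hsolex h0)
  set f : H → H := fun h0 => Classical.choose (hsolex h0) with hfdef
  have hadd : ∀ a b, f (a + b) = f a + f b := by
    intro a b
    have h1 : Sol A (a + b) (f a + f b) := by
      have := sol_sub (hf a) (sol_smul (-1 : ℂ) (hf b))
      simp only [neg_smul, one_smul, sub_neg_eq_add] at this
      exact this
    exact sol_unique hdense (hf (a + b)) h1
  have hsmul : ∀ (c : ℂ) (a : H), f (c • a) = c • f a :=
    fun c a => sol_unique hdense (hf (c • a)) (sol_smul c (hf a))
  set L : H →ₗ[ℂ] H := { toFun := f, map_add' := hadd, map_smul' := hsmul } with hL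
  refine ⟨L.mkContinuous 1 (fun x => ?_), fun h => ?_⟩
  · rw [one_mul]
    exact (sol_norm hdense (hf x)).1
  · exact hf h

theorem exists_B (hdense : Dense (A.domain : Set H)) (R : H →L[ℂ] H)
    (hR : ∀ h, Sol A h (R h)) :
    ∃ B : H →L[ℂ] H, ∀ h, ∃ h1 : R h ∈ A.domain, B h = A ⟨R h, h1⟩ := by
  set f : H → H := fun h => A ⟨R h, (hR h).fst⟩ with hfdef
  have happly : ∀ (h : H) (hm : R h ∈ A.domain), f h = A ⟨R h, hm⟩ := fun h hm => rfl
  have hadd : ∀ a b, f (a + b) = f a + f b := by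
    intro a b
    show A ⟨R (a+b), _⟩ = A ⟨R a, _⟩ + A ⟨R b, _⟩
    rw [show (⟨R (a+b), (hR (a+b)).fst⟩ : A.domain) = ⟨R a, (hR a).fst⟩ + ⟨R b, (hR b).fst⟩ by
      apply Subtype.ext; show R (a+b) = R a + R b; rw [_root_.map_add], A.map_add]
  have hsmul : ∀ (c : ℂ) (a : H), f (c • a) = c • f a := by
    intro c a
    show A ⟨R (c • a), _⟩ = c • A ⟨R a, _⟩
    rw [show (⟨R (c • a), (hR (c • a)).fst⟩ : A.domain) = c • ⟨R a, (hR a).fst⟩ by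
      apply Subtype.ext; show R (c • a) = c • R a; rw [_root_.map_smul], A.map_smul]
  set L : H →ₗ[ℂ] H := { toFun := f, map_add' := hadd, map_smul' := hsmul } with hL
  refine ⟨L.mkContinuous 1 (fun x => ?_), fun h => ⟨(hR h).fst, rfl⟩⟩
  rw [one_mul]
  exact (sol_norm hdense (hR x)).2


end Stmt19Aux

local notation "⟪" x ", " y "⟫" => @inner ℂ _ _ x y

open Stmt19Aux Polynomial in
theorem stmt19 (A : H →ₗ.[ℂ] H) (hdense : Dense (A.domain : Set H)) (hclosed : A.IsClosed)
    (n : ℕ) (hn : 3 ≤ n) (h : A.adjoint.pcomp A = A.ppow n) :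
    ∃ B : H →L[ℂ] H, A = (B : H →ₗ[ℂ] H).toPMap ⊤ := by
  obtain hsub | hnt := subsingleton_or_nontrivial H
  · refine ⟨0, LinearPMap.ext ?_ ?_⟩
    · rw [LinearMap.toPMap_domain, Submodule.eq_top_iff']
      intro x
      rw [Subsingleton.elim x 0]
      exact zero_mem _
    · intro x y _
      exact Subsingleton.elim _ _
  · haveI := hnt
    obtain ⟨R, hR⟩ := exists_R hdense hclosed (sol_exists hdense hclosed)
    obtain ⟨B, hB⟩ := exists_B hdense R hR
    -- (K1) basic facts about R
    have memD : ∀ v : H, R v ∈ (A.adjoint.pcomp A).domain := fun v =>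
      mem_pcomp_iff.mpr ⟨(hR v).fst, (hR v).snd.fst⟩
    have pval : ∀ v : H, (A.adjoint.pcomp A) ⟨R v, memD v⟩ = v - R v := by
      intro v
      obtain ⟨h1, h2, he⟩ := hR v
      rw [pcomp_apply' h1 h2 (memD v)]
      exact eq_sub_of_add_eq' he
    have iterRn : ∀ v : H, Iter A n (R v) (v - R v) := by
      intro v
      have hmem' : R v ∈ (A.ppow n).domain := by rw [← h]; exact memD v
      have h2 := (ppow_iter n (R v)).2 hmem'
      rwa [← apply_congr h (memD v) hmem', pval v] at h2
    -- (K4) uniqueness of solutions, packaged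
    have Rsol : ∀ {z w : H}, Iter A n z w → R (z + w) = z := by
      intro z w hzw
      have hm : z ∈ (A.adjoint.pcomp A).domain := by
        rw [h]; exact (ppow_iter n z).1.mpr ⟨w, hzw⟩
      have hm' : z ∈ (A.ppow n).domain := by rw [← h]; exact hm
      obtain ⟨h1, h2⟩ := mem_pcomp_iff.mp hm
      have hval : A.adjoint ⟨A ⟨z, h1⟩, h2⟩ = w := by
        rw [← pcomp_apply' h1 h2 hm, apply_congr h hm hm']
        exact iter_unique ((ppow_iter n z).2 hm') hzw
      have hsol : Sol A (z + w) z := ⟨h1, h2, by rw [hval]⟩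
      exact sol_unique hdense (hR (z + w)) hsol
    -- (K5) commutation lemma
    have comm : ∀ (k : ℕ), k ≤ n → ∀ (v y : H), Iter A k (R v) y → Iter A k (R (R v)) (R y) := by
      intro k hk v y hy
      have hRu : R v - R (R v) = R (v - R v) := (_root_.map_sub R v (R v)).symm
      obtain ⟨w', hw'⟩ := iter_prefix hk (iterRn (v - R v))
      obtain ⟨z0, hz0⟩ := iter_prefix hk (iterRn (R v))
      have hsum : Iter A k (R v) (z0 + w') := by
        have h3 := iter_vadd hz0 hw'
        rwa [show R (R v) + R (v - R v) = R v by rw [_root_.map_sub]; abel] at h3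
      have hyz : y = z0 + w' := iter_unique hy hsum
      have hnk : Iter A (k + n) (R (R v)) w' :=
        iter_add.mpr ⟨R v - R (R v), iterRn (R v), by rw [hRu]; exact hw'⟩
      have hnk' : Iter A (n + k) (R (R v)) w' := by rwa [Nat.add_comm] at hnk
      obtain ⟨z1, hz1k, hz1n⟩ := iter_add.mp hnk'
      obtain rfl : z1 = z0 := iter_unique hz1k hz0
      have hfin := Rsol hz1n
      rw [← hyz] at hfin
      rw [hfin]
      exact hz0
    -- (K11) B and R commute
    have hBR : ∀ v : H, B (R v) = R (B v) := by
      intro v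
      have h1 : Iter A 1 (R v) (B v) := by
        obtain ⟨hm, hBe⟩ := hB v
        exact ⟨R v, hm, rfl, hBe.symm⟩
      obtain ⟨z, hz, hz1, hz2⟩ := comm 1 (by omega) v (B v) h1
      obtain ⟨hm, hBe⟩ := hB (R v)
      rw [hBe, ← hz2]
      congr 1
      exact Subtype.ext (show R (R v) = z from hz1)
    -- (K6) powers of B
    have hBpow : ∀ k : ℕ, k ≤ n → 1 ≤ k → ∀ v : H, Iter A k ((R^k) v) ((B^k) v) := by
      intro k
      induction k with
      | zero => intro _ h1; omega
      | succ k ih =>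
        intro hk1 _ v
        rcases Nat.eq_zero_or_pos k with hk0 | hkpos
        · subst hk0
          obtain ⟨hm, hBe⟩ := hB v
          rw [pow_one, pow_one]
          exact ⟨R v, hm, rfl, hBe.symm⟩
        · have IH := ih (le_trans (Nat.le_succ k) hk1) hkpos
          obtain ⟨m, rfl⟩ : ∃ m, k = m + 1 := ⟨k - 1, by omega⟩
          have hIH : Iter A (m+1) (R ((R^m) v)) ((B^(m+1)) v) := by
            have h3 := IH v
            rwa [show ((R^(m+1)) v : H) = R ((R^m) v) from by rw [pow_succ']; rfl] at h3
          have hc := comm (m+1) (le_trans (Nat.le_succ _) hk1) ((R^m) v) _ hIH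
          obtain ⟨hm2, hBe⟩ := hB ((B^(m+1)) v)
          refine ⟨R ((B^(m+1)) v), hm2, ?_, ?_⟩
          · rwa [show R (R ((R^m) v)) = ((R^(m+1+1)) v : H) from by
              rw [pow_succ', pow_succ']; rfl] at hc
          · rw [show ((B^(m+1+1)) v : H) = B ((B^(m+1)) v) from by rw [pow_succ']; rfl, hBe]
    -- (K7) B^n pointwise
    have hBn : ∀ v : H, (B^n) v = (R^(n-1)) v - (R^n) v := by
      intro v
      have h1 : Iter A n ((R^n) v) ((B^n) v) := hBpow n le_rfl (by omega) v
      have hh : R^n = R * R^(n-1) := by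
        conv_lhs => rw [show n = (n-1)+1 by omega]
        rw [pow_succ']
      have e : ((R^n) v : H) = R ((R^(n-1)) v) := by rw [hh]; rfl
      have h2 : Iter A n (R ((R^(n-1)) v)) ((R^(n-1)) v - R ((R^(n-1)) v)) := iterRn _
      rw [← e] at h2
      exact iter_unique h1 h2
    -- (K9) R is selfadjoint
    have hRsym : ∀ a b : H, ⟪R a, b⟫ = ⟪a, R b⟫ := by
      intro a b
      have e1 : ⟪a - R a, R b⟫ = ⟪A ⟨R a, (hR a).fst⟩, A ⟨R b, (hR b).fst⟩⟫ :=
        sol_inner_eq hdense (hR a) ⟨R b, (hR b).fst⟩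
      have e2 : ⟪b - R b, R a⟫ = ⟪A ⟨R b, (hR b).fst⟩, A ⟨R a, (hR a).fst⟩⟫ :=
        sol_inner_eq hdense (hR b) ⟨R a, (hR a).fst⟩
      have e3 : ⟪R a, b - R b⟫ = ⟪A ⟨R a, (hR a).fst⟩, A ⟨R b, (hR b).fst⟩⟫ := by
        rw [← inner_conj_symm, e2, inner_conj_symm]
      have e4 : ⟪a - R a, R b⟫ = ⟪R a, b - R b⟫ := by rw [e1, e3]
      have e5 : ⟪a, R b⟫ - ⟪R a, R b⟫ = ⟪R a, b⟫ - ⟪R a, R b⟫ := by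
        rw [← inner_sub_left, ← inner_sub_right]; exact e4
      linear_combination -e5
    have hRsa : IsSelfAdjoint R :=
      ContinuousLinearMap.isSelfAdjoint_iff_isSymmetric.mpr (fun a b => hRsym a b)
    -- (K10) R is injective
    have hRinj : ∀ y, R y = 0 → y = 0 := by
      intro y hy
      obtain ⟨h1, h2, he⟩ := hR y
      have e0 : (⟨R y, h1⟩ : A.domain) = 0 := Subtype.ext (by simp [hy])
      have hz : A ⟨R y, h1⟩ = 0 :=
        (congrArg (fun t : ↥A.domain => A t) e0).trans A.toFun.map_zero
      have e1 : (⟨A ⟨R y, h1⟩, h2⟩ : A.adjoint.domain) = 0 := Subtype.ext (by simp [hz])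
      have hz2 : A.adjoint ⟨A ⟨R y, h1⟩, h2⟩ = 0 :=
        (congrArg (fun t : ↥A.adjoint.domain => A.adjoint t) e1).trans A.adjoint.toFun.map_zero
      rw [hz2, add_zero, hy] at he
      exact he.symm
    -- (K8) adjoint B * B = R - R^2
    have hBsB : (ContinuousLinearMap.adjoint B) * B = R - R^2 := by
      apply ContinuousLinearMap.ext; intro v
      apply ext_inner_right ℂ; intro w
      have h1 : ((ContinuousLinearMap.adjoint B * B) v : H)
          = (ContinuousLinearMap.adjoint B) (B v) := rfl
      rw [h1, ContinuousLinearMap.adjoint_inner_left]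
      obtain ⟨hmv, hBev⟩ := hB v
      obtain ⟨hmw, hBew⟩ := hB w
      rw [hBev, hBew]
      have h2 : ⟪v - R v, R w⟫ = ⟪A ⟨R v, hmv⟩, A ⟨R w, hmw⟩⟫ :=
        sol_inner_eq hdense (hR v) ⟨R w, (hR w).fst⟩
      rw [← h2, ← hRsym]
      have h3 : R (v - R v) = (R - R^2) v := by
        rw [_root_.map_sub]
        rfl
      rw [h3]
    -- CLM algebra: KEY identity
    have hRcommB : R * B = B * R := by
      ext v
      exact (hBR v).symm
    have hBnCLM : B^n = R^(n-1) - R^n := by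
      ext v
      rw [hBn v, ContinuousLinearMap.sub_apply]
    have cRB : Commute R B := hRcommB
    have hsBB : star B * B = R - R^2 := hBsB
    have cQB : Commute (R - R^2) B := cRB.sub_left (cRB.pow_left 2)
    have hPk : ∀ k : ℕ, (star B)^k * B^k = (R - R^2)^k := by
      intro k; induction k with
      | zero => simp
      | succ k ih =>
        rw [pow_succ (star B), pow_succ' B]
        calc (star B)^k * star B * (B * B^k)
            = (star B)^k * ((star B * B) * B^k) := by rw [mul_assoc, mul_assoc]
          _ = (star B)^k * ((R - R^2) * B^k) := by rw [hsBB]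
          _ = (star B)^k * (B^k * (R - R^2)) := by rw [(cQB.pow_right k).eq]
          _ = ((star B)^k * B^k) * (R - R^2) := by rw [mul_assoc]
          _ = (R - R^2)^k * (R - R^2) := by rw [ih]
          _ = (R - R^2)^(k+1) := (pow_succ _ k).symm
    have KEY : (R - R^2)^n = (R^(n-1) - R^n)^2 := by
      calc (R - R^2)^n = (star B)^n * B^n := (hPk n).symm
        _ = star (B^n) * B^n := by rw [star_pow]
        _ = star (R^(n-1) - R^n) * (R^(n-1) - R^n) := by rw [hBnCLM]
        _ = (R^(n-1) - R^n) * (R^(n-1) - R^n) := by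
            rw [star_sub, star_pow, star_pow, hRsa.star_eq]
        _ = (R^(n-1) - R^n)^2 := (sq _).symm
    -- spectral argument
    haveI : Nontrivial (H →L[ℂ] H) := by
      obtain ⟨x, hx⟩ := exists_ne (0 : H)
      exact ⟨1, 0, fun hc => hx (by
        have := congrArg (fun T : H →L[ℂ] H => T x) hc
        simpa using this)⟩
    have haev : aeval R ((X - X^2)^n - (X^(n-1) - X^n)^2 : ℂ[X]) = 0 := by
      simp only [_root_.map_sub, _root_.map_pow, aeval_X]
      rw [KEY, sub_self]
    have hspecR : ∀ μ ∈ spectrum ℂ R, μ = 0 ∨ μ = 1/2 ∨ μ = 1 := by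
      intro μ hμ
      have h0 : eval μ ((X - X^2)^n - (X^(n-1) - X^n)^2 : ℂ[X])
          ∈ spectrum ℂ (aeval R ((X - X^2)^n - (X^(n-1) - X^n)^2 : ℂ[X])) :=
        spectrum.subset_polynomial_aeval R _ ⟨μ, hμ, rfl⟩
      rw [haev, spectrum.zero_eq, Set.mem_singleton_iff] at h0
      have heval : (μ - μ^2)^n - (μ^(n-1) - μ^n)^2 = 0 := by simpa using h0
      have hre : μ = (μ.re : ℂ) := hRsa.mem_spectrum_eq_re hμ
      have htR : ((μ.re : ℝ) - μ.re^2)^n - (μ.re^(n-1) - μ.re^n)^2 = 0 := by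
        have hcast : (((μ.re : ℝ) - μ.re^2)^n - (μ.re^(n-1) - μ.re^n)^2 : ℂ) = 0 := by
          push_cast
          rw [← hre]
          exact heval
        exact_mod_cast hcast
      rcases real_root hn htR with hc | hc | hc
      · left; rw [hre, hc]; norm_num
      · right; left; rw [hre, hc]; norm_num
      · right; right; rw [hre, hc]; norm_num
    set N : H →L[ℂ] H := R^3 + R^3 - (R^2 + R^2 + R^2) + R with hNdef
    have hNaev : aeval R ((X^3 + X^3 - (X^2 + X^2 + X^2) + X : ℂ[X])) = N := by
      simp only [_root_.map_add, _root_.map_sub, _root_.map_pow, aeval_X, hNdef]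
    have hNsa : IsSelfAdjoint N := by
      rw [hNdef]
      exact (((hRsa.pow 3).add (hRsa.pow 3)).sub
        (((hRsa.pow 2).add (hRsa.pow 2)).add (hRsa.pow 2))).add hRsa
    have hNspec : ∀ z ∈ spectrum ℂ N, z = 0 := by
      intro z hz
      rw [← hNaev, spectrum.map_polynomial_aeval] at hz
      obtain ⟨μ, hμ, rfl⟩ := hz
      simp only [eval_add, eval_sub, eval_pow, eval_X]
      rcases hspecR μ hμ with hc | hc | hc <;> rw [hc] <;> norm_num
    have hNrad : spectralRadius ℂ N = 0 := by
      refine le_antisymm ?_ zero_le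
      unfold spectralRadius
      exact iSup₂_le fun z hz => by simp [hNspec z hz]
    have hN0 : N = 0 := by
      have h1 := hNsa.spectralRadius_eq_nnnorm
      rw [hNrad] at h1
      have h2 : ‖N‖₊ = 0 := by exact_mod_cast h1.symm
      simpa using h2
    have hRM : R * (R^2 + R^2 - (R + R + R) + 1) = N := by rw [hNdef]; noncomm_ring
    have hM0 : (R^2 + R^2 - (R + R + R) + 1 : H →L[ℂ] H) = 0 := by
      ext v
      have h1 : R ((R^2 + R^2 - (R + R + R) + 1 : H →L[ℂ] H) v) = 0 := by
        have h2 : R ((R^2 + R^2 - (R + R + R) + 1 : H →L[ℂ] H) v)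
            = (R * (R^2+R^2-(R+R+R)+1) : H →L[ℂ] H) v := rfl
        rw [h2, hRM, hN0, ContinuousLinearMap.zero_apply]
      have := hRinj _ h1
      simpa using this
    have hRG : R * ((1 + 1 + 1) - (R + R)) = 1 := by
      have hG : R * ((1 + 1 + 1) - (R + R)) = 1 - (R^2 + R^2 - (R + R + R) + 1) := by
        noncomm_ring
      rw [hG, hM0, sub_zero]
    -- conclusion
    set G : H →L[ℂ] H := ((1 : H →L[ℂ] H) + 1 + 1) - (R + R) with hGdef
    have hid : ∀ x : H, R (G x) = x := by
      intro x
      have h1 : (R * G) x = (1 : H →L[ℂ] H) x := by rw [hGdef, hRG]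
      simpa using h1
    have hdomtop : A.domain = ⊤ := by
      rw [Submodule.eq_top_iff']
      intro x
      have hmem := (hR (G x)).fst
      rwa [hid x] at hmem
    refine ⟨B * G, LinearPMap.ext ?_ ?_⟩
    · rw [LinearMap.toPMap_domain, hdomtop]
    · intro x hx hy
      obtain ⟨hm, hBe⟩ := hB (G (x : H))
      have hx2 : A ⟨x, hx⟩ = A ⟨R (G (x : H)), hm⟩ := by
        congr 1
        exact Subtype.ext (hid (x : H)).symm
      rw [hx2, ← hBe]
      rfl
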